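/- Under the hypotheses of the F-family, if in addition b ≥ 0.1 and c ≤ 0.5, then the case R+ fails, i.e. M̃ > M; more precisely ξ₄ − ξ₃ > z₄ − z₃ = M. -/

import Mathlib

private lemma Fderiv_quartic (a b c ξ₁ ξ₂ ξ₃ ξ₄ : ℝ)
    (hder : ∀ x : ℝ,
      deriv (fun t : ℝ => t * (t - a) * (t - b) * (t - c) * (t - 1)) x
        = 5 * (x - ξ₁) * (x - ξ₂) * (x - ξ₃) * (x - ξ₄)) :
    ∀ x : ℝ, 5 * (x - ξ₁) * (x - ξ₂) * (x - ξ₃) * (x - ξ₄)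
      = 5*x^4 - 4*(1+a+b+c)*x^3 + 3*(a+b+c+a*b+a*c+b*c)*x^2
        - 2*(a*b+a*c+b*c+a*b*c)*x + a*b*c := by
  intro x
  have d1 : HasDerivAt (fun t : ℝ => t * (t - a)) (1*(x-a)+x*1) x :=
    (hasDerivAt_id x).mul ((hasDerivAt_id x).sub_const a)
  have d2 : HasDerivAt (fun t : ℝ => t * (t - a) * (t - b)) ((1*(x-a)+x*1)*(x-b)+x*(x-a)*1) x :=
    d1.mul ((hasDerivAt_id x).sub_const b)
  have d3 : HasDerivAt (fun t : ℝ => t * (t - a) * (t - b) * (t - c))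
      (((1*(x-a)+x*1)*(x-b)+x*(x-a)*1)*(x-c)+x*(x-a)*(x-b)*1) x :=
    d2.mul ((hasDerivAt_id x).sub_const c)
  have d4 : HasDerivAt (fun t : ℝ => t * (t - a) * (t - b) * (t - c) * (t - 1))
      ((((1*(x-a)+x*1)*(x-b)+x*(x-a)*1)*(x-c)+x*(x-a)*(x-b)*1)*(x-1)+x*(x-a)*(x-b)*(x-c)*1) x :=
    d3.mul ((hasDerivAt_id x).sub_const 1)
  have h3 := hder x
  rw [d4.deriv] at h3
  linear_combination -h3

set_option maxHeartbeats 1000000 in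
private lemma Qu_neg (a b c : ℝ) (ha : 0 ≤ a) (hab : a ≤ b) (hbc : b ≤ c)
    (hb : (1:ℝ)/10 ≤ b) (hc : c ≤ 1/2) :
    5*((18+3*a+34*b+20*c)/80)^4 - 4*(1+a+b+c)*((18+3*a+34*b+20*c)/80)^3
      + 3*(a+b+c+a*b+a*c+b*c)*((18+3*a+34*b+20*c)/80)^2
      - 2*(a*b+a*c+b*c+a*b*c)*((18+3*a+34*b+20*c)/80) + a*b*c < 0 := by
  nlinarith [sq_nonneg (a-b), sq_nonneg (b-c), sq_nonneg (c-1/2), sq_nonneg (b-1/10),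
    mul_nonneg ha (sub_nonneg.2 hab), mul_nonneg (sub_nonneg.2 hab) (sub_nonneg.2 hbc),
    mul_nonneg (sub_nonneg.2 hbc) (by linarith : (0:ℝ) ≤ 1/2 - c), sq_nonneg (a+b+c),
    mul_nonneg ha (sub_nonneg.2 hbc), mul_nonneg ha (by linarith : (0:ℝ) ≤ 1/2 - c)]

set_option maxHeartbeats 1000000 in
private lemma Qv_neg (a b c : ℝ) (ha : 0 ≤ a) (hab : a ≤ b) (hbc : b ≤ c)
    (hb : (1:ℝ)/10 ≤ b) (hc : c ≤ 1/2) :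
    5*((58+3*a-6*b+20*c)/80)^4 - 4*(1+a+b+c)*((58+3*a-6*b+20*c)/80)^3
      + 3*(a+b+c+a*b+a*c+b*c)*((58+3*a-6*b+20*c)/80)^2
      - 2*(a*b+a*c+b*c+a*b*c)*((58+3*a-6*b+20*c)/80) + a*b*c < 0 := by
  have g0 : (0:ℝ) ≤ a := ha
  have g1 : (0:ℝ) ≤ b - a := by linarith
  have g2 : (0:ℝ) ≤ c - b := by linarith
  have g3 : (0:ℝ) ≤ 1/2 - c := by linarith
  have g4 : (0:ℝ) ≤ b - 1/10 := by linarith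
  linarith [g1,
    g3,
    g4,
    mul_nonneg (g0) g1,
    mul_nonneg (g1) g1,
    mul_nonneg (g1) g3,
    mul_nonneg (g2) g3,
    mul_nonneg (g2) g4,
    mul_nonneg (g3) g3,
    mul_nonneg (mul_nonneg (g0) g0) g1,
    mul_nonneg (mul_nonneg (g0) g0) g3,
    mul_nonneg (mul_nonneg (g0) g1) g1,
    mul_nonneg (mul_nonneg (g0) g1) g3,
    mul_nonneg (mul_nonneg (g0) g2) g3,
    mul_nonneg (mul_nonneg (g0) g4) g4,
    mul_nonneg (mul_nonneg (g1) g1) g1,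
    mul_nonneg (mul_nonneg (g1) g1) g3,
    mul_nonneg (mul_nonneg (g1) g2) g3,
    mul_nonneg (mul_nonneg (g2) g2) g2,
    mul_nonneg (mul_nonneg (g2) g3) g3,
    mul_nonneg (mul_nonneg (mul_nonneg (g0) g0) g0) g0,
    mul_nonneg (mul_nonneg (mul_nonneg (g0) g0) g0) g1,
    mul_nonneg (mul_nonneg (mul_nonneg (g0) g0) g0) g2,
    mul_nonneg (mul_nonneg (mul_nonneg (g0) g0) g1) g1,
    mul_nonneg (mul_nonneg (mul_nonneg (g0) g0) g1) g2,
    mul_nonneg (mul_nonneg (mul_nonneg (g0) g0) g2) g3,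
    mul_nonneg (mul_nonneg (mul_nonneg (g0) g1) g1) g1,
    mul_nonneg (mul_nonneg (mul_nonneg (g0) g1) g1) g2,
    mul_nonneg (mul_nonneg (mul_nonneg (g0) g1) g2) g3,
    mul_nonneg (mul_nonneg (mul_nonneg (g0) g2) g2) g3,
    mul_nonneg (mul_nonneg (mul_nonneg (g1) g1) g1) g2,
    mul_nonneg (mul_nonneg (mul_nonneg (g1) g1) g1) g3,
    mul_nonneg (mul_nonneg (mul_nonneg (g1) g1) g2) g3,
    mul_nonneg (mul_nonneg (mul_nonneg (g1) g2) g2) g2,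
    mul_nonneg (mul_nonneg (mul_nonneg (g2) g2) g2) g2]

set_option maxHeartbeats 1000000 in
/-- For `F(x) = x(x-a)(x-b)(x-c)(x-1)` with `0 ≤ a ≤ b ≤ c ≤ 1`, `b ≥ 0.1` and `c ≤ 0.5`,
the case R+ fails: `M̃ > M`; more precisely `ξ₄ - ξ₃ > z₄ - z₃ = M`. -/
theorem F_family_b_ge_01_c_le_05_Rminus
    (a b c : ℝ) (ha : 0 ≤ a) (hab : a ≤ b) (hbc : b ≤ c) (hc1 : c ≤ 1)
    (hb : 0.1 ≤ b) (hc : c ≤ 0.5)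
    (ξ₁ ξ₂ ξ₃ ξ₄ : ℝ) (hξ12 : ξ₁ ≤ ξ₂) (hξ23 : ξ₂ ≤ ξ₃) (hξ34 : ξ₃ ≤ ξ₄)
    (hder : ∀ x : ℝ,
      deriv (fun t : ℝ => t * (t - a) * (t - b) * (t - c) * (t - 1)) x
        = 5 * (x - ξ₁) * (x - ξ₂) * (x - ξ₃) * (x - ξ₄))
    (z₁ z₂ z₃ z₄ M Mt : ℝ)
    (hz₁ : z₁ = a / 2) (hz₂ : z₂ = (a + b) / 2)
    (hz₃ : z₃ = (b + c) / 2) (hz₄ : z₄ = (c + 1) / 2)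
    (hM : M = max (max (z₂ - z₁) (z₃ - z₂)) (z₄ - z₃))
    (hMt : Mt = max (max (ξ₂ - ξ₁) (ξ₃ - ξ₂)) (ξ₄ - ξ₃)) :
    Mt > M ∧ ξ₄ - ξ₃ > z₄ - z₃ ∧ z₄ - z₃ = M := by
  have hb1 : (1:ℝ)/10 ≤ b := by norm_num at hb ⊢; linarith
  have hc0 : c ≤ (1:ℝ)/2 := by norm_num at hc ⊢; linarith
  have hb0 : (0:ℝ) < b := by linarith
  have hQ := Fderiv_quartic a b c ξ₁ ξ₂ ξ₃ ξ₄ hder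
  -- Rolle on [0, b] gives a critical point below b, hence ξ₁ < b
  have hξ1b : ξ₁ < b := by
    obtain ⟨w, hw, hw0⟩ := exists_deriv_eq_zero
      (f := fun t : ℝ => t * (t - a) * (t - b) * (t - c) * (t - 1)) hb0
      (Continuous.continuousOn (by fun_prop)) (by
        show (0:ℝ) * (0 - a) * (0 - b) * (0 - c) * (0 - 1)
          = b * (b - a) * (b - b) * (b - c) * (b - 1)
        ring)
    have h := hder w
    rw [hw0] at h
    by_contra hcon
    push_neg at hcon
    have h1 : 0 < ξ₁ - w := by linarith [hw.2]
    have h2 : 0 < ξ₂ - w := by linarith [hw.2]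
    have h3 : 0 < ξ₃ - w := by linarith [hw.2]
    have h4 : 0 < ξ₄ - w := by linarith [hw.2]
    linarith [h, mul_pos (mul_pos (mul_pos h1 h2) h3) h4]
  -- hence ξ₂ ≤ b, since F'(b) ≥ 0
  have hξ2b : ξ₂ ≤ b := by
    by_contra hcon
    push_neg at hcon
    have hQb := hQ b
    have hpos : (0:ℝ) ≤ 5*b^4 - 4*(1+a+b+c)*b^3 + 3*(a+b+c+a*b+a*c+b*c)*b^2
        - 2*(a*b+a*c+b*c+a*b*c)*b + a*b*c := by
      linarith [mul_nonneg (mul_nonneg hb0.le (sub_nonneg.2 hab))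
        (mul_nonneg (sub_nonneg.2 hbc) (by linarith : (0:ℝ) ≤ 1 - b))]
    have h1 : 0 < b - ξ₁ := by linarith
    have h2 : 0 < ξ₂ - b := by linarith
    have h3 : 0 < ξ₃ - b := by linarith
    have h4 : 0 < ξ₄ - b := by linarith
    linarith [hQb, hpos, mul_pos (mul_pos (mul_pos h1 h2) h3) h4]
  -- the two evaluation points
  have hQu : 5 * ((18+3*a+34*b+20*c)/80 - ξ₁) * ((18+3*a+34*b+20*c)/80 - ξ₂)
      * ((18+3*a+34*b+20*c)/80 - ξ₃) * ((18+3*a+34*b+20*c)/80 - ξ₄) < 0 := by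
    rw [hQ]
    exact Qu_neg a b c ha hab hbc hb1 hc0
  have hQv : 5 * ((58+3*a-6*b+20*c)/80 - ξ₁) * ((58+3*a-6*b+20*c)/80 - ξ₂)
      * ((58+3*a-6*b+20*c)/80 - ξ₃) * ((58+3*a-6*b+20*c)/80 - ξ₄) < 0 := by
    rw [hQ]
    exact Qv_neg a b c ha hab hbc hb1 hc0
  have hub : b < (18+3*a+34*b+20*c)/80 := by linarith
  have hu3 : ξ₃ < (18+3*a+34*b+20*c)/80 := by
    by_contra hcon
    push_neg at hcon
    have h1 : 0 < (18+3*a+34*b+20*c)/80 - ξ₁ := by linarith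
    have h2 : 0 < (18+3*a+34*b+20*c)/80 - ξ₂ := by linarith
    have h3 : 0 ≤ ξ₃ - (18+3*a+34*b+20*c)/80 := by linarith
    have h4 : 0 ≤ ξ₄ - (18+3*a+34*b+20*c)/80 := by linarith
    linarith [hQu, mul_nonneg (mul_nonneg (mul_nonneg h1.le h2.le) h3) h4]
  have hv4 : (58+3*a-6*b+20*c)/80 < ξ₄ := by
    by_contra hcon
    push_neg at hcon
    have h1 : 0 < (58+3*a-6*b+20*c)/80 - ξ₁ := by linarith
    have h2 : 0 < (58+3*a-6*b+20*c)/80 - ξ₂ := by linarith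
    have h3 : 0 ≤ (58+3*a-6*b+20*c)/80 - ξ₃ := by linarith
    have h4 : 0 ≤ (58+3*a-6*b+20*c)/80 - ξ₄ := by linarith
    linarith [hQv, mul_nonneg (mul_nonneg (mul_nonneg h1.le h2.le) h3) h4]
  have hgap : ξ₄ - ξ₃ > (1-b)/2 := by linarith
  have hMval : z₄ - z₃ = M := by
    rw [hM]
    rw [max_eq_right]
    exact max_le (by rw [hz₁, hz₂, hz₃, hz₄]; linarith) (by rw [hz₂, hz₃, hz₄]; linarith)
  refine ⟨?_, by rw [hz₃, hz₄]; linarith, hMval⟩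
  have hle : ξ₄ - ξ₃ ≤ Mt := by rw [hMt]; exact le_max_right _ _
  have : z₄ - z₃ = (1-b)/2 := by rw [hz₃, hz₄]; ring
  linarith
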